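/- Let 0 < δ < 1/1000 and n large with n = 3t + r, r ∈ {0,1,2}. Let G be a graph on n vertices with minimum degree at least (3n-1)/4 with red/blue coloring, and let L ⊆ V(G) with |L| ≥ (2/3 - δ)n. Suppose X ⊆ V(G) \ L is a set of m ≤ t + 1 vertices each having fewer than δn + 2 blue edges into L. Then every vertex of X has at least (5/12 - 3δ)n red neighbors in L, and the red bipartite graph R[X, L] contains a cycle of length 2m. -/

import Mathlib

set_option linter.unusedSectionVars false
set_option linter.unusedVariables false
set_option maxHeartbeats 1000000

namespace J17
open List


open List

variable {V : Type} [Fintype V] [DecidableEq V] {H : SimpleGraph V} {X' L : Finset V}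

/-- cyclic alternating pair-list cycle: pairs (x_i, w_i), with edges
x_i ~ w_i and w_i ~ x_{i+1} (cyclically). -/
structure PC (H : SimpleGraph V) (X' L : Finset V) (l : List (V × V)) : Prop where
  len2 : 2 ≤ l.length
  lenEq : l.length = X'.card
  ndx : (l.map Prod.fst).Nodup
  ndw : (l.map Prod.snd).Nodup
  memx : ∀ p ∈ l, p.1 ∈ X'
  memw : ∀ p ∈ l, p.2 ∈ L
  adjI : ∀ p ∈ l, H.Adj p.1 p.2
  adjC : l.Chain' (fun p q => H.Adj p.2 q.1)
  adjE : ∀ p ∈ l.getLast?, ∀ q ∈ l.head?, H.Adj p.2 q.1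

lemma PC.swap {u v : List (V × V)} (h : PC H X' L (u ++ v)) : PC H X' L (v ++ u) := by
  rcases eq_or_ne u [] with rfl | hu
  · simpa using h
  rcases eq_or_ne v [] with rfl | hv
  · simpa using h
  obtain ⟨cu, cv, juv⟩ := List.isChain_append.1 h.adjC
  have hlast : (u ++ v).getLast? = v.getLast? := by
    rw [List.getLast?_append]
    rw [List.getLast?_eq_getLast (l := v) hv]
    rfl
  have hhead : (u ++ v).head? = u.head? := by
    rw [List.head?_append]
    rw [List.head?_eq_head hu]
    rfl
  refine ⟨?_, ?_, ?_, ?_, ?_, ?_, ?_, ?_, ?_⟩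
  · have := h.len2; simpa [List.length_append] using by
      simpa [List.length_append, Nat.add_comm] using this
  · have := h.lenEq; simpa [List.length_append, Nat.add_comm] using this
  · have := h.ndx; rw [List.map_append] at this ⊢; exact List.nodup_append_comm.1 this
  · have := h.ndw; rw [List.map_append] at this ⊢; exact List.nodup_append_comm.1 this
  · intro p hp; exact h.memx p (by simpa [List.mem_append, or_comm] using hp)
  · intro p hp; exact h.memw p (by simpa [List.mem_append, or_comm] using hp)
  · intro p hp; exact h.adjI p (by simpa [List.mem_append, or_comm] using hp)
  · refine List.isChain_append.2 ⟨cv, cu, ?_⟩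
    intro x hx y hy
    exact h.adjE x (by rw [hlast]; exact hx) y (by rw [hhead]; exact hy)
  · intro p hp q hq
    have hp' : p ∈ u.getLast? := by
      rw [List.getLast?_append, List.getLast?_eq_getLast (l := u) hu] at hp
      simpa [List.getLast?_eq_getLast (l := u) hu] using hp
    have hq' : q ∈ v.head? := by
      rw [List.head?_append, List.head?_eq_head hv] at hq
      simpa [List.head?_eq_head hv] using hq
    exact juv p hp' q hq'

lemma PC.rotate {l : List (V × V)} (h : PC H X' L l) (k : ℕ) :
    PC H X' L (l.rotate k) := by
  have hlen : 0 < l.length := lt_of_lt_of_le (by norm_num) h.len2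
  rw [← List.rotate_mod]
  rw [List.rotate_eq_drop_append_take (le_of_lt (Nat.mod_lt _ hlen))]
  have : l = l.take (k % l.length) ++ l.drop (k % l.length) := (List.take_append_drop _ _).symm
  exact PC.swap (this ▸ h)


/-- re-pairing of a reversed arc: from [(x₁,w₁),…,(xₖ,wₖ)] and c produce
[(xₖ,wₖ₋₁),…,(x₂,w₁),(x₁,c)]. -/
def flipB : List (V × V) → V → List (V × V)
  | [], _ => []
  | p :: tl, c => flipB tl p.2 ++ [(p.1, c)]

@[simp] lemma flipB_nil (c : V) : flipB ([] : List (V × V)) c = [] := rfl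

lemma flipB_length (l : List (V × V)) (c : V) : (flipB l c).length = l.length := by
  induction l generalizing c with
  | nil => rfl
  | cons p tl ih => simp [flipB, ih]

lemma flipB_ne_nil {l : List (V × V)} (hl : l ≠ []) (c : V) : flipB l c ≠ [] := by
  intro hc
  have := flipB_length l c
  rw [hc] at this
  simp at this
  exact hl (List.length_eq_zero_iff.1 this.symm)

lemma flipB_map_fst (l : List (V × V)) (c : V) :
    (flipB l c).map Prod.fst = (l.map Prod.fst).reverse := by
  induction l generalizing c with
  | nil => rfl
  | cons p tl ih => simp [flipB, ih]

lemma flipB_map_snd (l : List (V × V)) (c : V) (hl : l ≠ []) :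
    (flipB l c).map Prod.snd = ((l.map Prod.snd).dropLast).reverse ++ [c] := by
  induction l generalizing c with
  | nil => exact absurd rfl hl
  | cons p tl ih =>
    rcases eq_or_ne tl [] with rfl | htl
    · simp [flipB]
    · have hms : tl.map Prod.snd ≠ [] := by simpa using htl
      simp [flipB, ih p.2 htl, List.dropLast_cons_of_ne_nil hms]
lemma flipB_getLast? (l : List (V × V)) (c : V) (hl : l ≠ []) :
    (flipB l c).getLast? = (l.head?).map (fun p => (p.1, c)) := by
  induction l generalizing c with
  | nil => exact absurd rfl hl
  | cons p tl ih =>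
    simp [flipB, List.getLast?_append]

lemma flipB_mem {l : List (V × V)} {c : V} {q : V × V} (hq : q ∈ flipB l c) :
    q.1 ∈ l.map Prod.fst ∧ (q.2 ∈ l.map Prod.snd ∨ q.2 = c) := by
  constructor
  · have : q.1 ∈ (flipB l c).map Prod.fst := List.mem_map.2 ⟨q, hq, rfl⟩
    rw [flipB_map_fst] at this
    simpa using this
  · have : q.2 ∈ (flipB l c).map Prod.snd := List.mem_map.2 ⟨q, hq, rfl⟩
    rcases eq_or_ne l [] with rfl | hl
    · simp [flipB] at hq
    rw [flipB_map_snd l c hl] at this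
    rcases List.mem_append.1 this with h1 | h2
    · left
      have := List.mem_of_mem_dropLast (List.mem_reverse.1 h1)
      exact this
    · right; simpa using h2

lemma flipB_adjI {l : List (V × V)} {c : V}
    (hI : ∀ p ∈ l, H.Adj p.1 p.2)
    (hC : l.Chain' (fun p q => H.Adj p.2 q.1))
    (hc : ∀ q ∈ l.head?, H.Adj c q.1) :
    ∀ p ∈ flipB l c, H.Adj p.1 p.2 := by
  induction l generalizing c with
  | nil => intro p hp; simp [flipB] at hp
  | cons p tl ih =>
    intro q hq
    rcases List.mem_append.1 hq with h1 | h2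
    · refine ih (fun r hr => hI r (by simp [hr])) (hC.tail) ?_ q h1
      intro r hr
      rcases tl with _ | ⟨r0, tl'⟩
      · simp at hr
      · simp only [List.head?_cons, Option.mem_def, Option.some_inj] at hr
        subst hr
        exact (List.isChain_cons_cons.1 hC).1
    · simp only [List.mem_singleton] at h2
      subst h2
      have := hc p (by simp)
      exact this.symm

lemma flipB_adjC {l : List (V × V)} {c : V}
    (hI : ∀ p ∈ l, H.Adj p.1 p.2)
    (hC : l.Chain' (fun p q => H.Adj p.2 q.1)) :
    (flipB l c).Chain' (fun p q => H.Adj p.2 q.1) := by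
  induction l generalizing c with
  | nil => simp [flipB, List.Chain']
  | cons p tl ih =>
    refine List.isChain_append.2 ⟨ih (fun r hr => hI r (by simp [hr])) hC.tail, by simp, ?_⟩
    intro x hx y hy
    simp only [List.head?_cons, Option.mem_def, Option.some_inj] at hy
    subst hy
    rcases eq_or_ne tl [] with rfl | htl
    · simp [flipB] at hx
    rw [flipB_getLast? tl p.2 htl] at hx
    rcases tl with _ | ⟨r0, tl'⟩
    · exact absurd rfl htl
    simp only [List.head?_cons, Option.map_some, Option.mem_def, Option.some_inj] at hx
    subst hx
    exact (hI p (by simp)).symm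


lemma PC.insert2 {p0 p1 : V × V} {rest : List (V × V)}
    (h : PC H X' L (p0 :: p1 :: rest)) {a w' w'' : V}
    (haX : a ∉ X') (hdisj : ∀ x ∈ insert a X', x ∉ L)
    (hw'L : w' ∈ L) (hw''L : w'' ∈ L) (hne : w' ≠ w'')
    (hw'f : w' ∉ (p0 :: p1 :: rest).map Prod.snd)
    (hw''f : w'' ∉ (p0 :: p1 :: rest).map Prod.snd)
    (a1 : H.Adj p0.1 w') (a2 : H.Adj a w') (a3 : H.Adj a w'') (a4 : H.Adj w'' p1.1) :
    PC H (insert a X') L ((p0.1, w') :: (a, w'') :: p1 :: rest) := by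
  have hx0 : p0.1 ∈ X' := h.memx p0 (by simp)
  have hXsub : ∀ p ∈ p1 :: rest, p.1 ∈ insert a X' := by
    intro p hp; exact Finset.mem_insert_of_mem (h.memx p (by simp [hp]))
  have ndxo := h.ndx
  have ndwo := h.ndw
  simp only [List.map_cons, List.nodup_cons] at ndxo ndwo
  have hamem : ∀ p ∈ p0 :: p1 :: rest, p.1 ≠ a := by
    intro p hp hpa; exact haX (hpa ▸ h.memx p hp)
  obtain ⟨cc1, cc2⟩ := List.isChain_cons_cons.1 h.adjC
  refine ⟨?_, ?_, ?_, ?_, ?_, ?_, ?_, ?_, ?_⟩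
  · simp
  · have := h.lenEq
    simp only [List.length_cons] at this ⊢
    rw [Finset.card_insert_of_notMem haX, ← this]
  · -- ndx
    simp only [List.map_cons, List.nodup_cons]
    refine ⟨?_, ?_, ndxo.2.1, ndxo.2.2⟩
    · intro hmem
      rcases List.mem_cons.1 hmem with hc | hmem2
      · exact hamem p0 (by simp) hc
      · exact ndxo.1 hmem2
    · intro hmem
      rcases List.mem_cons.1 hmem with hc | hmem2
      · exact hamem p1 (by simp) hc.symm
      · rcases List.mem_map.1 hmem2 with ⟨p, hp, hc⟩
        exact hamem p (by simp [hp]) hc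
  · -- ndw
    simp only [List.map_cons, List.nodup_cons]
    refine ⟨?_, ?_, ndwo.2.1, ndwo.2.2⟩
    · intro hmem
      rcases List.mem_cons.1 hmem with hc | hmem2
      · exact hne hc
      · exact hw'f (by simp only [List.map_cons, List.mem_cons] at hmem2 ⊢; tauto)
    · intro hmem
      exact hw''f (by simp only [List.map_cons, List.mem_cons] at hmem ⊢; tauto)
  · -- memx
    intro p hp
    rcases List.mem_cons.1 hp with rfl | hp
    · exact Finset.mem_insert_of_mem hx0
    rcases List.mem_cons.1 hp with rfl | hp
    · exact Finset.mem_insert_self a X'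
    · exact hXsub p hp
  · -- memw
    intro p hp
    rcases List.mem_cons.1 hp with rfl | hp
    · exact hw'L
    rcases List.mem_cons.1 hp with rfl | hp
    · exact hw''L
    · exact h.memw p (by simp [hp])
  · -- adjI
    intro p hp
    rcases List.mem_cons.1 hp with rfl | hp
    · exact a1
    rcases List.mem_cons.1 hp with rfl | hp
    · exact a3
    · exact h.adjI p (by simp [hp])
  · -- adjC
    refine List.isChain_cons_cons.2 ⟨a2.symm, List.isChain_cons_cons.2 ⟨a4, cc2⟩⟩
  · -- adjE
    intro p hp q hq
    simp only [List.head?_cons, Option.mem_def, Option.some_inj] at hq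
    subst hq
    have hlast : ((p0.1, w') :: (a, w'') :: p1 :: rest).getLast? = (p1 :: rest).getLast? := by
      rw [show ((p0.1, w') :: (a, w'') :: p1 :: rest) = [(p0.1, w'), (a, w'')] ++ (p1 :: rest) from rfl,
        List.getLast?_append, List.getLast?_eq_getLast (l := (p1 :: rest)) (by simp)]
      rfl
    rw [hlast] at hp
    have := h.adjE p (by
      rw [show (p0 :: p1 :: rest) = [p0] ++ (p1 :: rest) from rfl, List.getLast?_append,
        List.getLast?_eq_getLast (l := (p1 :: rest)) (by simp)]
      rw [List.getLast?_eq_getLast (l := (p1 :: rest)) (by simp)] at hp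
      simpa using hp) p0 (by simp)
    simpa using this


lemma flipB_head_fst {l : List (V × V)} (hl : l ≠ []) (c : V) :
    ∀ y ∈ (flipB l c).head?, y.1 = (l.getLast hl).1 := by
  induction l generalizing c with
  | nil => exact absurd rfl hl
  | cons p tl ih =>
    intro y hy
    rcases eq_or_ne tl [] with rfl | htl
    · simp [flipB] at hy
      rw [← hy]
      rfl
    · have hfb : flipB tl p.2 ≠ [] := flipB_ne_nil htl p.2
      rw [show flipB (p :: tl) c = flipB tl p.2 ++ [(p.1, c)] from rfl] at hy
      rw [List.head?_append, List.head?_eq_head hfb] at hy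
      rw [show ((some ((flipB tl p.2).head hfb)).or [(p.1, c)].head?) = some ((flipB tl p.2).head hfb) from rfl] at hy
      simp only [Option.mem_def, Option.some_inj] at hy
      have := ih htl p.2 y (by rw [List.head?_eq_head hfb]; simp [hy])
      rw [this, List.getLast_cons htl]

lemma perm_multiset {α : Type*} {l₁ l₂ : List α} (h : (l₁ : Multiset α) = (l₂ : Multiset α)) :
    l₁.Perm l₂ := Multiset.coe_eq_coe.1 h

lemma PC.insert7 {B A : List (V × V)} (h : PC H X' L (B ++ A))
    (hB : B ≠ []) (hA : A ≠ []) {a wstar : V}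
    (haX : a ∉ X') (haL : a ∉ L) (hwL : wstar ∈ L)
    (hwf : wstar ∉ (B ++ A).map Prod.snd)
    (aB : H.Adj a ((B.getLast hB).2))
    (aA : H.Adj a ((A.getLast hA).2))
    (w1 : H.Adj wstar ((A.head hA).1))
    (w2 : H.Adj wstar ((B.head hB).1)) :
    PC H (insert a X') L (A ++ ((a, (B.getLast hB).2) :: flipB B wstar)) := by
  set wB := (B.getLast hB).2 with hwB
  obtain ⟨cB, cA, jBA⟩ := List.isChain_append.1 h.adjC
  have hBI : ∀ p ∈ B, H.Adj p.1 p.2 := fun p hp => h.adjI p (by simp [hp])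
  have hAI : ∀ p ∈ A, H.Adj p.1 p.2 := fun p hp => h.adjI p (by simp [hp])
  have hfb : flipB B wstar ≠ [] := flipB_ne_nil hB wstar
  -- permutation facts
  have permx : ((A ++ ((a, wB) :: flipB B wstar)).map Prod.fst).Perm
      (a :: (B ++ A).map Prod.fst) := by
    apply perm_multiset
    simp only [List.map_append, List.map_cons, flipB_map_fst]
    simp only [← Multiset.cons_coe, ← Multiset.coe_add, Multiset.coe_reverse]
    simp only [← Multiset.singleton_add, ← add_assoc]
    abel
  have permw : ((A ++ ((a, wB) :: flipB B wstar)).map Prod.snd).Perm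
      (wstar :: (B ++ A).map Prod.snd) := by
    apply perm_multiset
    have hBdec : (B.map Prod.snd).dropLast ++ [wB] = B.map Prod.snd := by
      have h1 : B.map Prod.snd ≠ [] := by simpa using hB
      have h2 : (B.map Prod.snd).getLast h1 = wB := by
        rw [hwB, List.getLast_map]
      conv_rhs => rw [← List.dropLast_append_getLast h1, h2]
    simp only [List.map_append, List.map_cons, flipB_map_snd B wstar hB]
    conv_rhs => rw [← hBdec]
    simp only [← Multiset.cons_coe, ← Multiset.coe_add, Multiset.coe_reverse]
    simp only [← Multiset.singleton_add, ← add_assoc]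
    abel
  have hmemx' : ∀ v ∈ (A ++ ((a, wB) :: flipB B wstar)).map Prod.fst,
      v = a ∨ v ∈ (B ++ A).map Prod.fst := by
    intro v hv
    have := permx.mem_iff.1 hv
    simpa using this
  have hmemw' : ∀ v ∈ (A ++ ((a, wB) :: flipB B wstar)).map Prod.snd,
      v = wstar ∨ v ∈ (B ++ A).map Prod.snd := by
    intro v hv
    have := permw.mem_iff.1 hv
    simpa using this
  refine ⟨?_, ?_, ?_, ?_, ?_, ?_, ?_, ?_, ?_⟩
  · have := h.len2
    simp only [List.length_append, List.length_cons, flipB_length] at this ⊢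
    omega
  · have := h.lenEq
    rw [Finset.card_insert_of_notMem haX, ← this]
    simp only [List.length_append, List.length_cons, flipB_length]
    omega
  · refine permx.nodup_iff.2 ?_
    refine List.nodup_cons.2 ⟨?_, h.ndx⟩
    intro hc
    rcases List.mem_map.1 hc with ⟨p, hp, hpa⟩
    exact haX (hpa ▸ h.memx p hp)
  · refine permw.nodup_iff.2 ?_
    exact List.nodup_cons.2 ⟨hwf, h.ndw⟩
  · intro p hp
    rcases hmemx' p.1 (List.mem_map.2 ⟨p, hp, rfl⟩) with rfl | hm
    · exact Finset.mem_insert_self _ _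
    · rcases List.mem_map.1 hm with ⟨q, hq, hq1⟩
      exact Finset.mem_insert_of_mem (hq1 ▸ h.memx q hq)
  · intro p hp
    rcases hmemw' p.2 (List.mem_map.2 ⟨p, hp, rfl⟩) with hr | hm
    · rw [hr]; exact hwL
    · rcases List.mem_map.1 hm with ⟨q, hq, hq1⟩
      exact hq1 ▸ h.memw q hq
  · -- adjI
    intro p hp
    rcases List.mem_append.1 hp with hp | hp
    · exact hAI p hp
    rcases List.mem_cons.1 hp with rfl | hp
    · exact aB
    · refine flipB_adjI hBI cB ?_ p hp
      intro q hq
      rw [List.head?_eq_head hB] at hq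
      simp only [Option.mem_def, Option.some_inj] at hq
      exact hq ▸ w2
  · -- adjC
    refine List.isChain_append.2 ⟨cA, ?_, ?_⟩
    · refine List.isChain_cons.2 ⟨?_, flipB_adjC hBI cB⟩
      intro y hy
      have h1 : y.1 = (B.getLast hB).1 := flipB_head_fst hB wstar y hy
      rw [h1]
      exact (hBI (B.getLast hB) (List.getLast_mem hB)).symm
    · intro x hx y hy
      rw [List.getLast?_eq_getLast (l := A) hA] at hx
      simp only [Option.mem_def, Option.some_inj] at hx hy
      subst hx
      rw [List.head?_cons, Option.some_inj] at hy
      subst hy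
      exact aA.symm
  · -- adjE
    intro p hp q hq
    rw [List.getLast?_append] at hp
    rw [List.getLast?_eq_getLast (l := ((a, wB) :: flipB B wstar)) (by simp)] at hp
    have hp' : some (((a, wB) :: flipB B wstar).getLast (by simp)) = some p := hp
    have hp2 : ((a, wB) :: flipB B wstar).getLast (by simp) = p := by
      injection hp'
    have hlast : ((a, wB) :: flipB B wstar).getLast (by simp) = ((B.head hB).1, wstar) := by
      have h1 : ((a, wB) :: flipB B wstar).getLast (by simp) = (flipB B wstar).getLast hfb :=
        List.getLast_cons hfb
      rw [h1]
      have h2 := flipB_getLast? B wstar hB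
      rw [List.getLast?_eq_getLast (l := _) hfb, List.head?_eq_head hB] at h2
      simp only [Option.map_some, Option.some_inj] at h2
      exact h2
    rw [hlast] at hp2
    rw [List.head?_append, List.head?_eq_head hA] at hq
    have hq' : some (A.head hA) = some q := hq
    have hq2 : A.head hA = q := by injection hq'
    rw [← hp2, ← hq2]
    exact w1


lemma PC.adjPos {l : List (V × V)} (h : PC H X' L l) (d : V × V) (i : ℕ) (hi : i < l.length) :
    H.Adj (l.getD i d).2 ((l.getD ((i + 1) % l.length) d).1) := by
  have hlen : 0 < l.length := by have := h.len2; omega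
  have hne : l ≠ [] := List.ne_nil_of_length_pos hlen
  have hmod : (i + 1) % l.length < l.length := Nat.mod_lt _ hlen
  rw [List.getD_eq_getElem l d hi, List.getD_eq_getElem l d hmod]
  rcases eq_or_ne i (l.length - 1) with hend | hend
  · have h1 : (i + 1) % l.length = 0 := by
      rw [hend]
      rw [Nat.sub_add_cancel (by omega), Nat.mod_self]
    have h2 := h.adjE (l.getLast hne) (by rw [List.getLast?_eq_getLast (l := l) hne]; rfl)
      (l.head hne) (by rw [List.head?_eq_head hne]; rfl)
    rw [List.getLast_eq_getElem (l := l) hne, List.head_eq_getElem_zero hne] at h2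
    have h3 : l[i]'hi = l[l.length - 1]'(by omega) := by
      congr 1
    rw [h3]
    have h4 : l[(i + 1) % l.length]'hmod = l[0]'(by omega) := by
      congr 1
    rw [h4]
    exact h2
  · have h1 : i < l.length - 1 := by omega
    have h2 : (i + 1) % l.length = i + 1 := Nat.mod_eq_of_lt (by omega)
    have h3 := List.isChain_iff_getElem.1 h.adjC i (by omega)
    have h4 : l[(i + 1) % l.length]'hmod = l[i + 1]'(by omega) := by
      congr 1
    rw [h4]
    exact h3

variable [DecidableRel H.Adj]

lemma filter_bound {F : ℝ} {x : V}
    (hdeg : (L.card : ℝ) - F ≤ ((L.filter (fun w => H.Adj x w)).card : ℝ))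
    {S : Finset V} (hS : S ⊆ L) :
    (S.card : ℝ) - F ≤ ((S.filter (fun w => H.Adj x w)).card : ℝ) := by
  have h1 : (S.filter (fun w => ¬ H.Adj x w)).card ≤ (L.filter (fun w => ¬ H.Adj x w)).card :=
    Finset.card_le_card (Finset.filter_subset_filter _ hS)
  have h2 := Finset.card_filter_add_card_filter_not (s := S) (p := fun w => H.Adj x w)
  have h3 := Finset.card_filter_add_card_filter_not (s := L) (p := fun w => H.Adj x w)
  have h4 : ((L.filter (fun w => ¬ H.Adj x w)).card : ℝ) ≤ F := by
    have : ((L.filter (fun w => H.Adj x w)).card : ℝ) + ((L.filter (fun w => ¬ H.Adj x w)).card : ℝ) = (L.card : ℝ) := by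
      exact_mod_cast congrArg (Nat.cast : ℕ → ℝ) h3
    linarith
  have h5 : ((S.filter (fun w => H.Adj x w)).card : ℝ) + ((S.filter (fun w => ¬ H.Adj x w)).card : ℝ) = (S.card : ℝ) := by
    exact_mod_cast congrArg (Nat.cast : ℕ → ℝ) h2
  have h6 : ((S.filter (fun w => ¬ H.Adj x w)).card : ℝ) ≤ ((L.filter (fun w => ¬ H.Adj x w)).card : ℝ) := by
    exact_mod_cast h1
  linarith


lemma PC.surgeryPos {l : List (V × V)} (h : PC H X' L l) (d : V × V)
    {a wstar : V} (haX : a ∉ X') (haL : a ∉ L) (hwL : wstar ∈ L)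
    (hwf : wstar ∉ l.map Prod.snd)
    {i j : ℕ} (hij : i < j) (hj : j < l.length)
    (ai : H.Adj a ((l.getD i d).2))
    (aj : H.Adj a ((l.getD j d).2))
    (w1 : H.Adj wstar ((l.getD ((i + 1) % l.length) d).1))
    (w2 : H.Adj wstar ((l.getD ((j + 1) % l.length) d).1)) :
    ∃ l', PC H (insert a X') L l' := by
  set len := l.length with hlendef
  have hlen2 : 2 ≤ len := h.len2
  have hi : i < len := lt_trans hij hj
  set l₁ := l.rotate (j + 1) with hl1def
  have hP1 : PC H X' L l₁ := h.rotate (j + 1)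
  have hlen1 : l₁.length = len := List.length_rotate l (j + 1)
  set t := len - (j + 1) + i with htdef
  have ht1 : t + 1 < len := by omega
  set B := l₁.take (t + 1) with hBdef
  set A := l₁.drop (t + 1) with hAdef
  have hBA : B ++ A = l₁ := List.take_append_drop _ _
  have hBlen : B.length = t + 1 := by
    rw [hBdef, List.length_take, hlen1]; omega
  have hAlen : A.length = len - (t + 1) := by
    rw [hAdef, List.length_drop, hlen1]
  have hBne : B ≠ [] := by
    intro hc; rw [hc] at hBlen; simp at hBlen
  have hAne : A ≠ [] := by
    intro hc; rw [hc] at hAlen; simp at hAlen; omega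
  -- getElem computations
  have hrot : ∀ (k : ℕ) (hk : k < l₁.length), l₁[k] = l[(k + (j + 1)) % len]'(Nat.mod_lt _ (by omega)) := by
    intro k hk
    rw [List.getElem_of_eq hl1def hk]
    exact List.getElem_rotate l (j + 1) k (by rw [← hl1def]; exact hk)
  have hgB : B.getLast hBne = l[i]'hi := by
    rw [List.getLast_eq_getElem (l := B) hBne]
    have h2 : B.length - 1 < B.length := by omega
    rw [List.getElem_of_eq hBdef h2, List.getElem_take]
    rw [hrot (B.length - 1) (by rw [hlen1]; omega)]
    have h5 : (B.length - 1 + (j + 1)) % len = i := by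
      have : B.length - 1 + (j + 1) = len + i := by omega
      rw [this]
      rw [Nat.add_mod_left]
      exact Nat.mod_eq_of_lt hi
    congr 1
  have hgA : A.getLast hAne = l[j]'hj := by
    rw [List.getLast_eq_getElem (l := A) hAne]
    have h2 : A.length - 1 < A.length := by omega
    rw [List.getElem_of_eq hAdef h2, List.getElem_drop]
    rw [hrot (t + 1 + (A.length - 1)) (by rw [hlen1]; omega)]
    have h5 : (t + 1 + (A.length - 1) + (j + 1)) % len = j := by
      have : t + 1 + (A.length - 1) + (j + 1) = len + j := by omega
      rw [this, Nat.add_mod_left]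
      exact Nat.mod_eq_of_lt hj
    congr 1
  have hhA : A.head hAne = l[(i + 1) % len]'(Nat.mod_lt _ (by omega)) := by
    rw [List.head_eq_getElem_zero hAne]
    have h2 : 0 < A.length := by omega
    rw [List.getElem_of_eq hAdef h2, List.getElem_drop]
    rw [hrot (t + 1 + 0) (by rw [hlen1]; omega)]
    have h5 : (t + 1 + 0 + (j + 1)) % len = (i + 1) % len := by
      have : t + 1 + 0 + (j + 1) = len + (i + 1) := by omega
      rw [this, Nat.add_mod_left]
    congr 1
  have hhB : B.head hBne = l[(j + 1) % len]'(Nat.mod_lt _ (by omega)) := by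
    rw [List.head_eq_getElem_zero hBne]
    have h2 : 0 < B.length := by omega
    rw [List.getElem_of_eq hBdef h2, List.getElem_take]
    rw [hrot 0 (by rw [hlen1]; omega)]
    have h5 : (0 + (j + 1)) % len = (j + 1) % len := by rw [Nat.zero_add]
    congr 1
  have hP2 : PC H X' L (B ++ A) := by rw [hBA]; exact hP1
  have hwf2 : wstar ∉ (B ++ A).map Prod.snd := by
    rw [hBA]
    intro hc
    rcases List.mem_map.1 hc with ⟨p, hp, hps⟩
    exact hwf (List.mem_map.2 ⟨p, List.mem_rotate.1 hp, hps⟩)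
  refine ⟨_, hP2.insert7 hBne hAne haX haL hwL hwf2 ?_ ?_ ?_ ?_⟩
  · rw [hgB]
    rw [List.getD_eq_getElem l d hi] at ai
    exact ai
  · rw [hgA]
    rw [List.getD_eq_getElem l d hj] at aj
    exact aj
  · rw [hhA]
    rw [List.getD_eq_getElem l d (Nat.mod_lt _ (by omega))] at w1
    exact w1
  · rw [hhB]
    rw [List.getD_eq_getElem l d (Nat.mod_lt _ (by omega))] at w2
    exact w2


lemma insert_step (X : Finset V) (F : ℝ)
    (hdisjXL : ∀ x ∈ X, x ∉ L)
    (hdeg : ∀ x ∈ X, (L.card : ℝ) - F ≤ ((L.filter (fun w => H.Adj x w)).card : ℝ))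
    (hC1 : 2 * F + 6 ≤ (L.card : ℝ))
    (hC2 : 5 * F < 4 * ((L.card : ℝ) - (X.card : ℝ) + 1))
    {X'' : Finset V} (hX'' : X'' ⊆ X) {a : V} (haX : a ∈ X) (haX'' : a ∉ X'')
    {l : List (V × V)} (hl : PC H X'' L l) :
    ∃ l', PC H (insert a X'') L l' := by
  classical
  set d : V × V := (a, a) with hd
  set len := l.length with hlendef
  have hlen2 : 2 ≤ len := hl.len2
  have hss : X'' ⊂ X := ⟨hX'', fun hsub => haX'' (hsub haX)⟩
  have hlenle : len + 1 ≤ X.card := by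
    have h1 := Finset.card_lt_card hss
    have h2 := hl.lenEq
    omega
  have haL : a ∉ L := hdisjXL a haX
  set snds := l.map Prod.snd with hsnds
  set sndF := snds.toFinset with hsndF
  have hsndsub : sndF ⊆ L := by
    intro w hw
    rw [hsndF, List.mem_toFinset, hsnds] at hw
    rcases List.mem_map.1 hw with ⟨p, hp, rfl⟩
    exact hl.memw p hp
  have hsndcard : sndF.card = len := by
    rw [hsndF, List.toFinset_card_of_nodup hl.ndw, List.length_map]
  set U := L \ sndF with hU
  have hUcard : (U.card : ℝ) = (L.card : ℝ) - len := by
    rw [hU, Finset.card_sdiff_of_subset hsndsub]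
    rw [Nat.cast_sub (Finset.card_le_card hsndsub), hsndcard]
  -- membership facts for positions
  have hmemXi : ∀ i, i < len → (l.getD i d).1 ∈ X'' := by
    intro i hi
    rw [List.getD_eq_getElem l d hi]
    exact hl.memx _ (List.getElem_mem hi)
  have hmemXiX : ∀ i, i < len → (l.getD i d).1 ∈ X := fun i hi => hX'' (hmemXi i hi)
  by_cases hQ : ∃ i, ∃ j, i < j ∧ j < len ∧ H.Adj a ((l.getD i d).2) ∧
      H.Adj a ((l.getD j d).2) ∧ ∃ w ∈ U, H.Adj w ((l.getD ((i + 1) % len) d).1) ∧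
      H.Adj w ((l.getD ((j + 1) % len) d).1)
  · obtain ⟨i, j, hij, hj, hai, haj, w, hwU, hw1, hw2⟩ := hQ
    have hwL : w ∈ L := (Finset.mem_sdiff.1 hwU).1
    have hwf : w ∉ l.map Prod.snd := by
      intro hc
      exact (Finset.mem_sdiff.1 hwU).2 (by rw [hsndF, List.mem_toFinset]; exact hc)
    exact hl.surgeryPos d haX'' haL hwL hwf hij hj hai haj hw1 hw2
  -- no double-pivot surgery available
  set P := (Finset.range len).filter (fun i => H.Adj a ((l.getD i d).2)) with hP
  have hmodinj : ∀ u, u < len → ∀ v, v < len → (u + 1) % len = (v + 1) % len → u = v := by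
    intro u hu v hv he
    rcases eq_or_ne (u + 1) len with h1 | h1
    · rcases eq_or_ne (v + 1) len with h2 | h2
      · omega
      · rw [h1, Nat.mod_self, Nat.mod_eq_of_lt (by omega)] at he; omega
    · rcases eq_or_ne (v + 1) len with h2 | h2
      · rw [h2, Nat.mod_self, Nat.mod_eq_of_lt (by omega)] at he; omega
      · rw [Nat.mod_eq_of_lt (by omega), Nat.mod_eq_of_lt (by omega)] at he; omega
  have hphi_inj : ∀ u, u < len → ∀ v, v < len →
      (l.getD ((u + 1) % len) d).1 = (l.getD ((v + 1) % len) d).1 → u = v := by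
    intro u hu v hv he
    have hu1 : (u + 1) % len < len := Nat.mod_lt _ (by omega)
    have hv1 : (v + 1) % len < len := Nat.mod_lt _ (by omega)
    rw [List.getD_eq_getElem l d hu1, List.getD_eq_getElem l d hv1] at he
    have hmap : (l.map Prod.fst)[(u + 1) % len]'(by rw [List.length_map]; exact hu1) =
        (l.map Prod.fst)[(v + 1) % len]'(by rw [List.length_map]; exact hv1) := by
      rw [List.getElem_map, List.getElem_map]
      exact he
    have := (hl.ndx.getElem_inj_iff).1 hmap
    exact hmodinj u hu v hv this
  have hP4 : P.card ≤ 4 := by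
    by_contra hP5
    push_neg at hP5
    obtain ⟨T, hTP, hTcard⟩ := Finset.exists_subset_card_eq (show 5 ≤ P.card by omega)
    have hTlen : ∀ i ∈ T, i < len := by
      intro i hi
      have := hTP hi
      rw [hP, Finset.mem_filter, Finset.mem_range] at this
      exact this.1
    have hTadj : ∀ i ∈ T, H.Adj a ((l.getD i d).2) := by
      intro i hi
      have := hTP hi
      rw [hP, Finset.mem_filter] at this
      exact this.2
    set φ : ℕ → V := fun i => (l.getD ((i + 1) % len) d).1 with hφ
    have hinjT : Set.InjOn φ T := by
      intro u hu v hv he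
      exact hphi_inj u (hTlen u hu) v (hTlen v hv) he
    set Y := T.image φ with hY
    have hYcard : Y.card = 5 := by
      rw [hY, Finset.card_image_of_injOn hinjT, hTcard]
    have hYX : ∀ y ∈ Y, y ∈ X := by
      intro y hy
      rw [hY, Finset.mem_image] at hy
      obtain ⟨i, hi, rfl⟩ := hy
      have h1 : (i + 1) % len < len := Nat.mod_lt _ (by omega)
      exact hmemXiX _ h1
    set Sy : V → Finset V := fun y => U.filter (fun w => H.Adj y w) with hSy
    have hdisjY : ∀ y ∈ Y, ∀ y' ∈ Y, y ≠ y' → Disjoint (Sy y) (Sy y') := by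
      intro y hy y' hy' hne
      rw [Finset.disjoint_left]
      intro w hw hw'
      rw [hY, Finset.mem_image] at hy hy'
      obtain ⟨i, hi, rfl⟩ := hy
      obtain ⟨j, hj, rfl⟩ := hy'
      have hij : i ≠ j := fun hc => hne (by rw [hc])
      rw [hSy, Finset.mem_filter] at hw hw'
      rcases Nat.lt_or_ge i j with hlt | hge
      · exact hQ ⟨i, j, hlt, hTlen j hj, hTadj i hi, hTadj j hj, w, hw.1,
          hw.2.symm, hw'.2.symm⟩
      · have hlt : j < i := by omega
        exact hQ ⟨j, i, hlt, hTlen i hi, hTadj j hj, hTadj i hi, w, hw.1,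
          hw'.2.symm, hw.2.symm⟩
    have hbi := Finset.card_biUnion hdisjY
    have hbisub : Y.biUnion Sy ⊆ U := by
      intro w hw
      rw [Finset.mem_biUnion] at hw
      obtain ⟨y, hy, hw⟩ := hw
      exact Finset.mem_of_mem_filter w hw
    have hsumlow : (Y.card : ℝ) * ((U.card : ℝ) - F) ≤ ∑ y ∈ Y, ((Sy y).card : ℝ) := by
      have := Finset.card_nsmul_le_sum Y (fun y => ((Sy y).card : ℝ)) ((U.card : ℝ) - F) ?_
      · rwa [nsmul_eq_mul] at this
      · intro y hy
        exact filter_bound (hdeg y (hYX y hy)) (Finset.sdiff_subset)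
    have hsum_eq : ∑ y ∈ Y, ((Sy y).card : ℝ) = ((Y.biUnion Sy).card : ℝ) := by
      rw [hbi]
      push_cast
      rfl
    have hle : ((Y.biUnion Sy).card : ℝ) ≤ (U.card : ℝ) := by
      exact_mod_cast Finset.card_le_card hbisub
    rw [hYcard] at hsumlow
    have hXlen : (len : ℝ) ≤ (X.card : ℝ) - 1 := by
      have : (len : ℝ) + 1 ≤ (X.card : ℝ) := by exact_mod_cast hlenle
      linarith
    have h5 : (5 : ℝ) * ((U.card : ℝ) - F) ≤ (U.card : ℝ) := by
      calc (5 : ℝ) * ((U.card : ℝ) - F) ≤ ∑ y ∈ Y, ((Sy y).card : ℝ) := by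
            exact_mod_cast hsumlow
        _ = _ := hsum_eq
        _ ≤ _ := hle
    linarith [hXlen, hC2, hUcard, h5]
  -- now |P| ≤ 4 : build Z and do the simple insertion
  set Na := L.filter (fun w => H.Adj a w) with hNa
  have hcap : (Na ∩ sndF).card ≤ 4 := by
    have hsub2 : Na ∩ sndF ⊆ P.image (fun i => (l.getD i d).2) := by
      intro w hw
      rw [Finset.mem_inter] at hw
      have hw2 := hw.2
      rw [hsndF, List.mem_toFinset, hsnds] at hw2
      rcases List.mem_map.1 hw2 with ⟨p, hp, rfl⟩
      rcases List.mem_iff_getElem.1 hp with ⟨i, hi, rfl⟩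
      refine Finset.mem_image.2 ⟨i, ?_, ?_⟩
      · rw [hP, Finset.mem_filter, Finset.mem_range]
        refine ⟨hi, ?_⟩
        rw [List.getD_eq_getElem l d hi]
        have := hw.1
        rw [hNa, Finset.mem_filter] at this
        exact this.2
      · rw [List.getD_eq_getElem l d hi]
    calc (Na ∩ sndF).card ≤ (P.image (fun i => (l.getD i d).2)).card := Finset.card_le_card hsub2
      _ ≤ P.card := Finset.card_image_le
      _ ≤ 4 := hP4
  set Z := Na \ sndF with hZ
  have hZcard : ((L.card : ℝ) - F) - 4 ≤ (Z.card : ℝ) := by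
    have h1 := Finset.card_sdiff_add_card_inter Na sndF
    have h2 := hdeg a haX
    rw [← hNa] at h2
    have h3 : (Na.card : ℝ) = (Z.card : ℝ) + ((Na ∩ sndF).card : ℝ) := by
      rw [hZ]; exact_mod_cast h1.symm
    have h4 : ((Na ∩ sndF).card : ℝ) ≤ 4 := by exact_mod_cast hcap
    linarith
  have hZL : Z ⊆ L := fun w hw => Finset.mem_of_mem_filter w ((Finset.mem_sdiff.1 hw).1)
  have hZa : ∀ w ∈ Z, H.Adj a w := by
    intro w hw
    have := (Finset.mem_sdiff.1 hw).1
    rw [hNa, Finset.mem_filter] at this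
    exact this.2
  have hZf : ∀ w ∈ Z, w ∉ l.map Prod.snd := by
    intro w hw hc
    exact (Finset.mem_sdiff.1 hw).2 (by rw [hsndF, List.mem_toFinset]; exact hc)
  -- the two head positions
  have h0len : 0 < len := by omega
  have h1len : 1 < len := by omega
  have hx0X : (l.getD 0 d).1 ∈ X := hmemXiX 0 h0len
  have hx1X : (l.getD 1 d).1 ∈ X := hmemXiX 1 h1len
  set W0 := Z.filter (fun w => H.Adj ((l.getD 0 d).1) w) with hW0
  set W1 := Z.filter (fun w => H.Adj ((l.getD 1 d).1) w) with hW1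
  have hW0card : (2 : ℝ) ≤ (W0.card : ℝ) := by
    have := filter_bound (hdeg _ hx0X) hZL
    rw [← hW0] at this
    linarith
  have hW1card : (2 : ℝ) ≤ (W1.card : ℝ) := by
    have := filter_bound (hdeg _ hx1X) hZL
    rw [← hW1] at this
    linarith
  have hW0c : 2 ≤ W0.card := by exact_mod_cast hW0card
  have hW1c : 2 ≤ W1.card := by exact_mod_cast hW1card
  obtain ⟨w', hw'⟩ := Finset.card_pos.1 (by omega : 0 < W0.card)
  obtain ⟨w'', hw'', hww⟩ := Finset.exists_mem_ne (by omega : 1 < W1.card) w'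
  -- destructure l
  obtain ⟨p0, tl0, hll0⟩ := List.exists_cons_of_ne_nil
    (show l ≠ [] from List.ne_nil_of_length_pos (by omega))
  obtain ⟨p1, rest, hll1⟩ := List.exists_cons_of_ne_nil
    (show tl0 ≠ [] from by
      intro hc
      rw [hc] at hll0
      have : l.length = 1 := by rw [hll0]; rfl
      omega)
  have hll : l = p0 :: p1 :: rest := by rw [hll0, hll1]
  have hgd0 : (l.getD 0 d).1 = p0.1 := by rw [hll]; rfl
  have hgd1 : (l.getD 1 d).1 = p1.1 := by rw [hll]; rfl
  rw [Finset.mem_filter] at hw' hw''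
  have a1 : H.Adj p0.1 w' := by rw [← hgd0]; exact hw'.2
  have a4' : H.Adj p1.1 w'' := by rw [← hgd1]; exact hw''.2
  refine ⟨_, PC.insert2 (hll ▸ hl) haX'' ?_ (hZL hw'.1) (hZL hw''.1) (Ne.symm hww) ?_ ?_
    a1 (hZa w' hw'.1) (hZa w'' hw''.1) a4'.symm⟩
  · intro x hx
    rcases Finset.mem_insert.1 hx with rfl | hx
    · exact haL
    · exact hdisjXL x (hX'' hx)
  · rw [← hll]; exact hZf w' hw'.1
  · rw [← hll]; exact hZf w'' hw''.1


lemma base_case (X : Finset V) (F : ℝ)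
    (hdisjXL : ∀ x ∈ X, x ∉ L)
    (hdeg : ∀ x ∈ X, (L.card : ℝ) - F ≤ ((L.filter (fun w => H.Adj x w)).card : ℝ))
    (hC1 : 2 * F + 6 ≤ (L.card : ℝ))
    {X' : Finset V} (hsub : X' ⊆ X) (hcard : X'.card = 2) :
    ∃ l, PC H X' L l := by
  obtain ⟨x, y, hxy, hX'⟩ := Finset.card_eq_two.1 hcard
  have hxX : x ∈ X := hsub (by rw [hX']; simp)
  have hyX : y ∈ X := hsub (by rw [hX']; simp)
  set A := L.filter (fun w => H.Adj x w) with hA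
  set B := L.filter (fun w => H.Adj y w) with hB
  have hAL : A ⊆ L := Finset.filter_subset _ _
  have hBL : B ⊆ L := Finset.filter_subset _ _
  have hunion : (A ∪ B).card ≤ L.card := Finset.card_le_card (Finset.union_subset hAL hBL)
  have hie := Finset.card_inter_add_card_union A B
  have hcn : (2 : ℝ) ≤ ((A ∩ B).card : ℝ) := by
    have h1 := hdeg x hxX
    have h2 := hdeg y hyX
    rw [← hA] at h1
    rw [← hB] at h2
    have h3 : ((A ∩ B).card : ℝ) + ((A ∪ B).card : ℝ) = (A.card : ℝ) + (B.card : ℝ) := by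
      exact_mod_cast hie
    have h4 : ((A ∪ B).card : ℝ) ≤ (L.card : ℝ) := by exact_mod_cast hunion
    linarith
  have hcn2 : 1 < (A ∩ B).card := by
    have : (1 : ℝ) < ((A ∩ B).card : ℝ) := by linarith
    exact_mod_cast this
  obtain ⟨w', hw', w'', hw'', hww⟩ := Finset.one_lt_card.1 hcn2
  rw [Finset.mem_inter] at hw' hw''
  have hw'A : H.Adj x w' := (Finset.mem_filter.1 hw'.1).2
  have hw'B : H.Adj y w' := (Finset.mem_filter.1 hw'.2).2
  have hw''A : H.Adj x w'' := (Finset.mem_filter.1 hw''.1).2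
  have hw''B : H.Adj y w'' := (Finset.mem_filter.1 hw''.2).2
  have hw'L : w' ∈ L := Finset.mem_of_mem_filter w' hw'.1
  have hw''L : w'' ∈ L := Finset.mem_of_mem_filter w'' hw''.1
  refine ⟨[(x, w'), (y, w'')], ?_, ?_, ?_, ?_, ?_, ?_, ?_, ?_, ?_⟩
  · simp
  · rw [hcard]; rfl
  · simp [hxy]
  · simp [hww]
  · intro p hp
    rcases List.mem_cons.1 hp with rfl | hp
    · rw [hX']; simp
    rcases List.mem_cons.1 hp with rfl | hp
    · rw [hX']; simp
    · simp at hp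
  · intro p hp
    rcases List.mem_cons.1 hp with rfl | hp
    · exact hw'L
    rcases List.mem_cons.1 hp with rfl | hp
    · exact hw''L
    · simp at hp
  · intro p hp
    rcases List.mem_cons.1 hp with rfl | hp
    · exact hw'A
    rcases List.mem_cons.1 hp with rfl | hp
    · exact hw''B
    · simp at hp
  · exact List.isChain_cons_cons.2 ⟨hw'B.symm, List.isChain_singleton _⟩
  · intro p hp q hq
    simp only [List.getLast?_cons_cons, List.getLast?_singleton, Option.mem_def,
      Option.some_inj] at hp
    simp only [List.head?_cons, Option.mem_def, Option.some_inj] at hq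
    rw [← hp, ← hq]
    exact hw''A.symm

lemma key (X : Finset V) (F : ℝ)
    (hdisjXL : ∀ x ∈ X, x ∉ L)
    (hdeg : ∀ x ∈ X, (L.card : ℝ) - F ≤ ((L.filter (fun w => H.Adj x w)).card : ℝ))
    (hC1 : 2 * F + 6 ≤ (L.card : ℝ))
    (hC2 : 5 * F < 4 * ((L.card : ℝ) - (X.card : ℝ) + 1))
    (hX2 : 2 ≤ X.card) :
    ∃ l, PC H X L l := by
  have main : ∀ n : ℕ, ∀ X' : Finset V, X' ⊆ X → X'.card = n + 2 → ∃ l, PC H X' L l := by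
    intro n
    induction n with
    | zero =>
      intro X' hsub hcard
      exact base_case X F hdisjXL hdeg hC1 hsub hcard
    | succ k ih =>
      intro X' hsub hcard
      have hne : X'.Nonempty := Finset.card_pos.1 (by omega)
      obtain ⟨a, ha⟩ := hne
      have hX'' : X'.erase a ⊆ X := (Finset.erase_subset a X').trans hsub
      have hcard'' : (X'.erase a).card = k + 2 := by
        rw [Finset.card_erase_of_mem ha, hcard]
        omega
      obtain ⟨l, hl⟩ := ih (X'.erase a) hX'' hcard''
      obtain ⟨l', hl'⟩ := insert_step X F hdisjXL hdeg hC1 hC2 hX''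
        (hsub ha) (Finset.notMem_erase a X') hl
      rw [Finset.insert_erase ha] at hl'
      exact ⟨l', hl'⟩
  exact main (X.card - 2) X (subset_refl X) (by omega)


def fl : List (V × V) → List V
  | [] => []
  | p :: tl => p.1 :: p.2 :: fl tl

lemma fl_length (l : List (V × V)) : (fl l).length = 2 * l.length := by
  induction l with
  | nil => rfl
  | cons p tl ih => simp [fl, ih]; omega

lemma fl_mem {l : List (V × V)} {v : V} :
    v ∈ fl l ↔ v ∈ l.map Prod.fst ∨ v ∈ l.map Prod.snd := by
  induction l with
  | nil => simp [fl]
  | cons p tl ih => simp [fl, ih]; tauto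

lemma fl_nodup {l : List (V × V)} (ndx : (l.map Prod.fst).Nodup)
    (ndw : (l.map Prod.snd).Nodup)
    (hdisj : ∀ v, v ∈ l.map Prod.fst → v ∈ l.map Prod.snd → False) :
    (fl l).Nodup := by
  induction l with
  | nil => simp [fl]
  | cons p tl ih =>
    simp only [List.map_cons, List.nodup_cons] at ndx ndw
    simp only [fl, List.nodup_cons]
    refine ⟨?_, ?_, ih ndx.2 ndw.2 ?_⟩
    · simp only [List.mem_cons, fl_mem, not_or]
      refine ⟨?_, ?_, ?_⟩
      · intro hc; exact hdisj p.1 (by simp) (by simp [hc])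
      · exact fun hc => ndx.1 hc
      · intro hc; exact hdisj p.1 (by simp) (by simp [hc])
    · simp only [fl_mem, not_or]
      refine ⟨?_, ?_⟩
      · intro hc; exact hdisj p.2 (by simp [hc]) (by simp)
      · exact fun hc => ndw.1 hc
    · intro v hv1 hv2; exact hdisj v (by simp [hv1]) (by simp [hv2])

lemma fl_chain {l : List (V × V)} (c : V)
    (hI : ∀ p ∈ l, H.Adj p.1 p.2)
    (hC : l.Chain' (fun p q => H.Adj p.2 q.1))
    (hc : ∀ p ∈ l.getLast?, H.Adj p.2 c) :
    (fl l ++ [c]).Chain' H.Adj := by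
  induction l with
  | nil => simp [fl, List.Chain']
  | cons p tl ih =>
    simp only [fl, List.cons_append]
    refine List.isChain_cons_cons.2 ⟨hI p (by simp), ?_⟩
    rcases eq_or_ne tl [] with rfl | htl
    · simp only [fl, List.nil_append]
      refine List.isChain_cons_cons.2 ⟨hc p (by simp), by simp⟩
    · obtain ⟨q, tl', rfl⟩ := List.exists_cons_of_ne_nil htl
      simp only [fl, List.cons_append]
      refine List.isChain_cons_cons.2 ⟨(List.isChain_cons_cons.1 hC).1, ?_⟩
      have := ih (fun r hr => hI r (by simp [hr])) (List.isChain_cons_cons.1 hC).2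
        (fun r hr => hc r (by rw [List.getLast?_cons_cons]; exact hr))
      simpa [fl, List.Chain'] using this

lemma walk_of_chain : ∀ (l : List V) (u v : V), (u :: (l ++ [v])).Chain' H.Adj →
    ∃ w : H.Walk u v, w.support = u :: (l ++ [v]) := by
  intro l
  induction l with
  | nil =>
    intro u v hc
    simp only [List.nil_append] at hc
    have hadj : H.Adj u v := (List.isChain_cons_cons.1 hc).1
    exact ⟨SimpleGraph.Walk.cons hadj SimpleGraph.Walk.nil, by simp⟩
  | cons c l ih =>
    intro u v hc
    simp only [List.cons_append] at hc
    have hadj : H.Adj u c := (List.isChain_cons_cons.1 hc).1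
    obtain ⟨w, hw⟩ := ih c v (List.isChain_cons_cons.1 hc).2
    exact ⟨SimpleGraph.Walk.cons hadj w, by simp [hw]⟩

lemma path_end_edge {u v : V} (p : H.Walk u v) (hp : p.IsPath)
    (he : s(v, u) ∈ p.edges) : p.length = 1 := by
  induction p with
  | nil => simp at he
  | @cons a c b hadj q ih =>
    rw [SimpleGraph.Walk.edges_cons] at he
    rw [SimpleGraph.Walk.cons_isPath_iff] at hp
    rcases List.mem_cons.1 he with hc | hc
    · rw [Sym2.eq_iff] at hc
      rcases hc with ⟨h1, h2⟩ | ⟨h1, h2⟩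
      · exfalso
        rw [← h1] at hp
        exact hp.2 q.end_mem_support
      · subst h1
        have : q = SimpleGraph.Walk.nil := (SimpleGraph.Walk.isPath_iff_eq_nil (p := q)).1 hp.1
        subst this
        simp
    · exfalso
      exact hp.2 (SimpleGraph.Walk.snd_mem_support_of_mem_edges q hc)

lemma pc_to_cycle {l : List (V × V)}
    (len2 : 2 ≤ l.length)
    (ndx : (l.map Prod.fst).Nodup) (ndw : (l.map Prod.snd).Nodup)
    (hdisj : ∀ v, v ∈ l.map Prod.fst → v ∈ l.map Prod.snd → False)
    (adjI : ∀ p ∈ l, H.Adj p.1 p.2)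
    (adjC : l.Chain' (fun p q => H.Adj p.2 q.1))
    (adjE : ∀ p ∈ l.getLast?, ∀ q ∈ l.head?, H.Adj p.2 q.1) :
    ∃ (u : V) (c : H.Walk u u), c.IsCycle ∧ c.length = 2 * l.length := by
  obtain ⟨p0, tl, rfl⟩ : ∃ p0 tl, l = p0 :: tl := by
    rcases l with _ | ⟨p0, tl⟩
    · simp at len2
    · exact ⟨p0, tl, rfl⟩
  have hne : (p0 :: tl) ≠ [] := by simp
  have hch : (fl (p0 :: tl) ++ [p0.1]).Chain' H.Adj :=
    fl_chain p0.1 adjI adjC (fun p hp => adjE p hp p0 (by simp))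
  -- fl (p0::tl) = p0.1 :: p0.2 :: fl tl
  simp only [fl, List.cons_append] at hch
  have hadj0 : H.Adj p0.1 p0.2 := (List.isChain_cons_cons.1 hch).1
  obtain ⟨pw, hpw⟩ := walk_of_chain (fl tl) p0.2 p0.1 (List.isChain_cons_cons.1 hch).2
  have hflnd : (fl (p0 :: tl)).Nodup := fl_nodup ndx ndw hdisj
  simp only [fl, List.nodup_cons] at hflnd
  have hpwnodup : pw.support.Nodup := by
    rw [hpw]
    refine List.nodup_cons.2 ⟨?_, ?_⟩
    · intro hc
      rcases List.mem_append.1 hc with hc | hc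
      · exact hflnd.2.1 hc
      · simp only [List.mem_singleton] at hc
        exact hdisj p0.2 (by rw [hc]; simp) (by simp)
    · rw [List.nodup_append]
      refine ⟨hflnd.2.2, by simp, ?_⟩
      intro v hv
      simp only [List.mem_singleton]
      intro b hb hc
      subst hb hc
      exact hflnd.1 (by simp [hv])
  have hpwpath : pw.IsPath := SimpleGraph.Walk.IsPath.mk' hpwnodup
  have hpwlen : pw.length = 2 * tl.length + 1 := by
    have h2 := pw.length_support
    rw [hpw, List.length_cons, List.length_append, List.length_singleton, fl_length] at h2
    omega
  have hedge : s(p0.1, p0.2) ∉ pw.edges := by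
    intro hc
    have h3 := path_end_edge pw hpwpath hc
    rw [List.length_cons] at len2
    omega
  refine ⟨p0.1, SimpleGraph.Walk.cons hadj0 pw, ?_, ?_⟩
  · exact SimpleGraph.Path.cons_isCycle ⟨pw, hpwpath⟩ hadj0 hedge
  · have hl : (p0 :: tl).length = tl.length + 1 := List.length_cons
    rw [SimpleGraph.Walk.length_cons, hpwlen, hl]
    omega


end J17

/-- `G` contains a cycle of length `ℓ`. -/
def hasCycleLength {V : Type*} (G : SimpleGraph V) (ℓ : ℕ) : Prop :=
  ∃ (u : V) (c : G.Walk u u), c.IsCycle ∧ c.length = ℓ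

theorem stmt17 (δ : ℝ) (hδ0 : 0 < δ) (hδ1 : δ < 1 / 1000) :
    ∃ n₀ : ℕ, ∀ n t r : ℕ, n₀ ≤ n → n = 3 * t + r → r ≤ 2 →
    ∀ (V : Type) [Fintype V] [DecidableEq V]
      (G R B : SimpleGraph V)
      [DecidableRel G.Adj] [DecidableRel R.Adj] [DecidableRel B.Adj],
      Fintype.card V = n →
      -- minimum degree at least (3n - 1)/4
      (∀ v : V, (3 * (n : ℝ) - 1) / 4 ≤ G.degree v) →
      -- red/blue coloring
      R ⊔ B = G →
      ∀ (L X : Finset V) (m : ℕ),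
        -- |L| ≥ (2/3 - δ)n
        ((2 : ℝ) / 3 - δ) * n ≤ L.card →
        -- X ⊆ V(G) \ L, |X| = m ≤ t + 1 (and m ≥ 2 so that a cycle can exist)
        X ⊆ Finset.univ \ L → X.card = m → 2 ≤ m → m ≤ t + 1 →
        -- every x ∈ X has fewer than δn + 2 blue edges into L
        (∀ x ∈ X, ((L.filter fun w => B.Adj x w).card : ℝ) < δ * n + 2) →
        -- conclusions
        ((∀ x ∈ X, ((5 : ℝ) / 12 - 3 * δ) * n ≤ (L.filter fun w => R.Adj x w).card) ∧
          hasCycleLength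
            (R ⊓ SimpleGraph.fromRel fun a b => a ∈ X ∧ b ∈ L) (2 * m)) := by
  refine ⟨max 2000 ⌈(10 : ℝ) / δ⌉₊, ?_⟩
  intro n t r hn0 hntr hr V _ _ G R B _ _ _ hcard hmindeg hRB L X m hL hXL hXm hm2 hmt hblue
  -- basic numeric facts
  have hn2000 : (2000 : ℝ) ≤ (n : ℝ) := by
    have : (2000 : ℕ) ≤ n := le_trans (le_max_left _ _) hn0
    exact_mod_cast this
  have hδn : (10 : ℝ) ≤ δ * n := by
    have h1 : (⌈(10 : ℝ) / δ⌉₊ : ℝ) ≤ n := by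
      have : ⌈(10 : ℝ) / δ⌉₊ ≤ n := le_trans (le_max_right _ _) hn0
      exact_mod_cast this
    have h2 : (10 : ℝ) / δ ≤ n := le_trans (Nat.le_ceil _) h1
    calc (10 : ℝ) = (10 / δ) * δ := by field_simp
      _ ≤ (n : ℝ) * δ := by apply mul_le_mul_of_nonneg_right h2 (le_of_lt hδ0)
      _ = δ * n := by ring
  have hδsmall : δ * n ≤ n / 1000 := by
    have : δ * n ≤ (1 / 1000) * n := by
      apply mul_le_mul_of_nonneg_right (le_of_lt hδ1) (by positivity)
    linarith
  have hm3 : 3 * (m : ℝ) ≤ (n : ℝ) + 3 := by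
    have h1 : 3 * m ≤ n + 3 := by omega
    exact_mod_cast h1
  -- disjointness
  have hXdisj : ∀ x ∈ X, x ∉ L := by
    intro x hx
    have := hXL hx
    rw [Finset.mem_sdiff] at this
    exact this.2
  -- the bipartite red graph
  set H : SimpleGraph V := R ⊓ SimpleGraph.fromRel (fun a b => a ∈ X ∧ b ∈ L) with hH
  haveI : DecidableRel H.Adj := fun a b => Classical.dec _
  have hHR : ∀ x ∈ X, ∀ w ∈ L, (H.Adj x w ↔ R.Adj x w) := by
    intro x hx w hw
    rw [hH]
    constructor
    · intro h
      exact h.1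
    · intro h
      refine ⟨h, ?_⟩
      rw [SimpleGraph.fromRel_adj]
      exact ⟨fun hc => (hXdisj x hx) (hc ▸ hw), Or.inl ⟨hx, hw⟩⟩
  have hfilter : ∀ x ∈ X, L.filter (fun w => H.Adj x w) = L.filter (fun w => R.Adj x w) := by
    intro x hx
    apply Finset.filter_congr
    intro w hw
    exact hHR x hx w hw
  -- degree bound
  set F : ℝ := ((n : ℝ) - 3) / 4 + δ * n + 2 with hF
  have hdegR : ∀ x ∈ X, (L.card : ℝ) - F ≤ ((L.filter (fun w => R.Adj x w)).card : ℝ) := by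
    intro x hx
    have hxnL : x ∉ L := hXdisj x hx
    -- non-G-neighbours in L
    have hsub1 : L.filter (fun w => ¬ G.Adj x w) ⊆
        Finset.univ \ insert x (G.neighborFinset x) := by
      intro w hw
      rw [Finset.mem_filter] at hw
      rw [Finset.mem_sdiff]
      refine ⟨Finset.mem_univ w, ?_⟩
      rw [Finset.mem_insert]
      push_neg
      refine ⟨fun hc => hxnL (hc ▸ hw.1), ?_⟩
      rw [SimpleGraph.mem_neighborFinset]
      intro hc
      exact hw.2 hc
    have hcard1 : ((L.filter (fun w => ¬ G.Adj x w)).card : ℝ) ≤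
        (n : ℝ) - 1 - G.degree x := by
      have h1 : (Finset.univ \ insert x (G.neighborFinset x)).card =
          n - (G.degree x + 1) := by
        rw [Finset.card_sdiff_of_subset (Finset.subset_univ _), Finset.card_univ, hcard,
          Finset.card_insert_of_notMem (SimpleGraph.notMem_neighborFinset_self (G := G) (v := x)),
          SimpleGraph.card_neighborFinset_eq_degree]
      have h2 : G.degree x + 1 ≤ n := by
        have h3 : insert x (G.neighborFinset x) ⊆ Finset.univ := Finset.subset_univ _
        have h4 := Finset.card_le_card h3
        rw [Finset.card_univ, hcard, Finset.card_insert_of_notMem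
          (SimpleGraph.notMem_neighborFinset_self (G := G) (v := x)),
          SimpleGraph.card_neighborFinset_eq_degree] at h4
        omega
      have h5 := Finset.card_le_card hsub1
      rw [h1] at h5
      have h6 : ((n - (G.degree x + 1) : ℕ) : ℝ) = (n : ℝ) - (G.degree x + 1) := by
        rw [Nat.cast_sub h2]
        push_cast
        ring
      have h7 : ((L.filter (fun w => ¬ G.Adj x w)).card : ℝ) ≤ ((n - (G.degree x + 1) : ℕ) : ℝ) := by
        exact_mod_cast h5
      rw [h6] at h7
      linarith
    -- split non-R into non-G and blue
    have hsub2 : L.filter (fun w => ¬ R.Adj x w) ⊆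
        L.filter (fun w => ¬ G.Adj x w) ∪ L.filter (fun w => B.Adj x w) := by
      intro w hw
      rw [Finset.mem_filter] at hw
      rw [Finset.mem_union, Finset.mem_filter, Finset.mem_filter]
      by_cases hG : G.Adj x w
      · right
        refine ⟨hw.1, ?_⟩
        rw [← hRB, SimpleGraph.sup_adj] at hG
        rcases hG with h | h
        · exact absurd h hw.2
        · exact h
      · exact Or.inl ⟨hw.1, hG⟩
    have hcard2 : ((L.filter (fun w => ¬ R.Adj x w)).card : ℝ) ≤ F := by
      have h1 := Finset.card_le_card hsub2
      have h2 := Finset.card_union_le (L.filter (fun w => ¬ G.Adj x w))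
        (L.filter (fun w => B.Adj x w))
      have h3 : ((L.filter (fun w => ¬ R.Adj x w)).card : ℝ) ≤
          ((L.filter (fun w => ¬ G.Adj x w)).card : ℝ) +
          ((L.filter (fun w => B.Adj x w)).card : ℝ) := by
        exact_mod_cast le_trans h1 h2
      have h4 := hblue x hx
      have h5 := hmindeg x
      rw [hF]
      linarith
    have h6 := Finset.card_filter_add_card_filter_not
      (s := L) (p := fun w => R.Adj x w)
    have h7 : ((L.filter (fun w => R.Adj x w)).card : ℝ) +
        ((L.filter (fun w => ¬ R.Adj x w)).card : ℝ) = (L.card : ℝ) := by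
      exact_mod_cast h6
    linarith
  -- first conclusion
  have hconc1 : ∀ x ∈ X, ((5 : ℝ) / 12 - 3 * δ) * n ≤ (L.filter fun w => R.Adj x w).card := by
    intro x hx
    have h1 := hdegR x hx
    rw [hF] at h1
    nlinarith [hδn, hn2000, hδsmall, hL, h1, hδ0]
  refine ⟨hconc1, ?_⟩
  -- apply the cycle machinery
  have hdegH : ∀ x ∈ X, (L.card : ℝ) - F ≤ ((L.filter (fun w => H.Adj x w)).card : ℝ) := by
    intro x hx
    rw [hfilter x hx]
    exact hdegR x hx
  have hC1 : 2 * F + 6 ≤ (L.card : ℝ) := by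
    rw [hF]
    nlinarith [hδn, hn2000, hδsmall, hL]
  have hC2 : 5 * F < 4 * ((L.card : ℝ) - (X.card : ℝ) + 1) := by
    rw [hF, hXm]
    nlinarith [hδn, hn2000, hδsmall, hL, hm3]
  have hX2 : 2 ≤ X.card := by omega
  obtain ⟨l, hl⟩ := J17.key (H := H) (L := L) X F hXdisj hdegH hC1 hC2 hX2
  obtain ⟨u, c, hc, hclen⟩ := J17.pc_to_cycle (H := H) (l := l) hl.len2 hl.ndx hl.ndw
    (by
      intro v hv1 hv2
      rcases List.mem_map.1 hv1 with ⟨p, hp, rfl⟩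
      rcases List.mem_map.1 hv2 with ⟨q, hq, hq2⟩
      have h1 : p.1 ∈ X := hl.memx p hp
      have h2 : p.1 ∈ L := by rw [← hq2]; exact hl.memw q hq
      exact hXdisj p.1 h1 h2)
    hl.adjI hl.adjC hl.adjE
  refine ⟨u, c, hc, ?_⟩
  rw [hclen, hl.lenEq, hXm]
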